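/- arXiv:1308.1732 — 3 statements merged into one kernel-verified Lean document; each statement's English description precedes it below -/
import Mathlib

section
/- Let R be a commutative ring, d : R → R a derivation, M the free R-module with basis e₁, e₂, and D : M → M an additive map satisfying the Leibniz rule D(f·m) = d(f)·m + f·D(m) for all f ∈ R, m ∈ M, such that D(e₁) = ∂₀·e₁ + e₂ and D(e₂) = λ·e₁ − ∂₀·e₂ for given ∂₀, λ ∈ R. For α ∈ R set e₂′ := e₂ − α·e₁. Then D(e₁) = (∂₀ + α)·e₁ + e₂′ and D(e₂′) = (λ − α² − (d(α) + 2·∂₀·α))·e₁ − (∂₀ + α)·e₂′. -/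
/-- Coordinate form of the change-of-splitting lemma: if `D e₁ = ∂₀·e₁ + e₂` and
`D e₂ = λ·e₁ − ∂₀·e₂`, then with `e₂′ = e₂ − α·e₁` one has
`D e₁ = (∂₀+α)·e₁ + e₂′` and `D e₂′ = (λ − α² − (d α + 2∂₀α))·e₁ − (∂₀+α)·e₂′`. -/
theorem change_of_splitting {R M : Type*} [CommRing R] [AddCommGroup M] [Module R M]
    (d : Derivation ℤ R R) (b : Module.Basis (Fin 2) R M)
    (D : M →+ M) (hLeib : ∀ (f : R) (m : M), D (f • m) = d f • m + f • D m)
    (dz lam α : R)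
    (h1 : D (b 0) = dz • b 0 + b 1)
    (h2 : D (b 1) = lam • b 0 - dz • b 1) :
    D (b 0) = (dz + α) • b 0 + (b 1 - α • b 0) ∧
      D (b 1 - α • b 0) =
        (lam - α ^ 2 - (d α + 2 * dz * α)) • b 0 - (dz + α) • (b 1 - α • b 0) := by
  constructor
  · rw [h1]; module
  · rw [map_sub, hLeib, h1, h2]; module
end

section
/- Let p be a prime, q = 4 if p = 2 and q = p otherwise, and K a field complete with respect to a nonarchimedean absolute value |·|, equipped with an isometric field embedding of Q_p (absolute value normalized by |p| = 1/p). Let T denote the torsion subgroup of Z_p^×. Then the map sending a continuous group homomorphism χ : Z_p^× → K^× to the pair (χ|_T, χ(1+q)) is a bijection from the set of continuous group homomorphisms Z_p^× → K^× onto the set of pairs (ω, u) where ω : T → K^× is a group homomorphism and u ∈ K satisfies |u − 1| < 1. -/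
set_option linter.unusedSectionVars false

open Filter Topology
namespace WS

variable {p : ℕ} [Fact p.Prime]
variable {L : Type*} [NormedField L] [IsUltrametricDist L]
variable {j : ℤ_[p] →+* L} (hj : ∀ x, ‖j x‖ = ‖x‖) {u : L} (hu : ‖u - 1‖ < 1)

noncomputable def bseries (j : ℤ_[p] →+* L) (u : L) (s : ℤ_[p]) : L :=
  ∑' n : ℕ, j (Ring.choose s n) * (u - 1) ^ n

include hj in
lemma norm_bterm_le (s : ℤ_[p]) (n : ℕ) : ‖j (Ring.choose s n) * (u - 1) ^ n‖ ≤ ‖u - 1‖ ^ n := by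
  rw [norm_mul, norm_pow, hj]
  exact mul_le_of_le_one_left (by positivity) (PadicInt.norm_le_one _)

include hj hu in
lemma bsummable [CompleteSpace L] (s : ℤ_[p]) :
    Summable fun n : ℕ => j (Ring.choose s n) * (u - 1) ^ n :=
  Summable.of_norm_bounded (summable_geometric_of_lt_one (norm_nonneg _) hu)
    (norm_bterm_le hj s)

include hj hu in
lemma continuous_bseries [CompleteSpace L] : Continuous (bseries j u) := by
  refine continuous_tsum (fun n => ?_) (summable_geometric_of_lt_one (norm_nonneg _) hu)
    (fun n s => norm_bterm_le hj s n)
  have hjc : Continuous j := by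
    rw [Metric.continuous_iff]
    intro b ε hε
    refine ⟨ε, hε, fun a hab => ?_⟩
    rw [dist_eq_norm] at hab ⊢
    rw [← map_sub, hj]
    exact hab
  exact (hjc.comp (PadicInt.continuous_choose n)).mul continuous_const

lemma bseries_natCast [CompleteSpace L] (j : ℤ_[p] →+* L) (u : L) (n : ℕ) :
    bseries j u (n : ℤ_[p]) = u ^ n := by
  rw [bseries]
  have h0 : ∀ k ∉ Finset.range (n + 1), j (Ring.choose ((n : ℕ) : ℤ_[p]) k) * (u - 1) ^ k = 0 := by
    intro k hk
    rw [Finset.mem_range, not_lt] at hk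
    rw [Ring.choose_natCast, Nat.choose_eq_zero_of_lt hk]
    simp
  rw [tsum_eq_sum h0]
  have := add_pow (u - 1) 1 n
  simp only [one_pow, mul_one, sub_add_cancel] at this
  rw [this]
  refine Finset.sum_congr rfl fun k _ => ?_
  rw [Ring.choose_natCast, mul_comm ((u-1)^k)]
  congr 1
  simp

lemma bseries_zero [CompleteSpace L] (j : ℤ_[p] →+* L) (u : L) : bseries j u 0 = 1 := by
  have h := bseries_natCast j u 0
  rwa [Nat.cast_zero, pow_zero] at h

include hj hu in
lemma norm_bseries_sub_one_le [CompleteSpace L] (s : ℤ_[p]) :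
    ‖bseries j u s - 1‖ ≤ ‖u - 1‖ := by
  have hsum := bsummable hj hu s
  rw [bseries, Summable.tsum_eq_zero_add hsum]
  have h0 : j (Ring.choose s 0) * (u - 1) ^ 0 = 1 := by
    rw [Ring.choose_zero_right]; simp
  rw [h0, add_sub_cancel_left]
  refine IsUltrametricDist.norm_tsum_le_of_forall_le_of_nonneg (norm_nonneg _) fun n => ?_
  refine (norm_bterm_le hj s (n+1)).trans ?_
  exact pow_le_of_le_one (norm_nonneg _) hu.le n.succ_ne_zero

include hj hu in
lemma norm_bseries_eq_one [CompleteSpace L] (s : ℤ_[p]) : ‖bseries j u s‖ = 1 := by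
  have h1 : ‖bseries j u s - 1‖ < 1 := lt_of_le_of_lt (norm_bseries_sub_one_le hj hu s) hu
  have : bseries j u s = 1 + (bseries j u s - 1) := by ring
  rw [this, IsUltrametricDist.norm_add_eq_max_of_norm_ne_norm, norm_one]
  · rw [max_eq_left h1.le]
  · rw [norm_one]; exact (ne_of_lt h1).symm

include hj hu in
lemma bseries_ne_zero [CompleteSpace L] (s : ℤ_[p]) : bseries j u s ≠ 0 := by
  intro h
  have := norm_bseries_eq_one hj hu s
  rw [h, norm_zero] at this
  norm_num at this

include hj hu in
lemma bseries_add [CompleteSpace L] (s t : ℤ_[p]) :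
    bseries j u (s + t) = bseries j u s * bseries j u t := by
  have hc := continuous_bseries hj hu
  have hd : Dense (Set.range fun nm : ℕ × ℕ => ((nm.1 : ℤ_[p]), (nm.2 : ℤ_[p]))) := by
    have := (PadicInt.denseRange_natCast (p := p)).prodMap
      (PadicInt.denseRange_natCast (p := p))
    simpa [DenseRange, Prod.map, Set.range] using this
  have key : (fun st : ℤ_[p] × ℤ_[p] => bseries j u (st.1 + st.2)) =
      fun st => bseries j u st.1 * bseries j u st.2 := by
    refine Continuous.ext_on hd ?_ ?_ ?_
    · exact hc.comp (continuous_fst.add continuous_snd)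
    · exact (hc.comp continuous_fst).mul (hc.comp continuous_snd)
    · rintro _ ⟨⟨n, m⟩, rfl⟩
      simp only
      rw [← Nat.cast_add, bseries_natCast, bseries_natCast, bseries_natCast, pow_add]
  exact congrFun key (s, t)

variable {p : ℕ} [Fact p.Prime]

lemma digit_sum_pos (hp : 1 < p) : ∀ n : ℕ, n ≠ 0 → 0 < ((Nat.digits p n).sum) := by
  intro n
  induction' n using Nat.strong_induction_on with n ih
  intro hn
  rw [Nat.digits_def' hp (Nat.pos_of_ne_zero hn), List.sum_cons]
  rcases Nat.eq_zero_or_pos (n % p) with h | h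
  · have hdvd : p ∣ n := Nat.dvd_of_mod_eq_zero h
    have hdm := Nat.div_mul_cancel hdvd
    have hq : n / p ≠ 0 := by
      intro h0
      rw [h0] at hdm
      omega
    have := ih (n / p) (Nat.div_lt_self (Nat.pos_of_ne_zero hn) hp) hq
    omega
  · omega

lemma val_factorial_le {n : ℕ} (hn : 2 ≤ n) (e : ℕ) (he : e = if p = 2 then 2 else 1) :
    padicValNat p (Nat.factorial n) + 1 ≤ e * (n - 1) := by
  have hp := (Fact.out : p.Prime)
  have hv := sub_one_mul_padicValNat_factorial (p := p) n
  have hs : 0 < (p.digits n).sum := digit_sum_pos hp.one_lt n (by omega)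
  by_cases h2 : p = 2
  · subst h2
    norm_num at he
    subst he
    omega
  · have hp3 : 3 ≤ p := by
      have := hp.two_le
      rcases Nat.lt_or_ge p 3 with h | h
      · interval_cases p <;> simp_all
      · exact h
    rw [if_neg h2] at he
    subst he
    have h2v : 2 * padicValNat p (Nat.factorial n) ≤ (p - 1) * padicValNat p (Nat.factorial n) :=
      Nat.mul_le_mul_right _ (by omega)
    omega



-- Stage 4 : specialization to ℚ_[p]
section QP

lemma norm_coeRingHom (x : ℤ_[p]) : ‖(PadicInt.Coe.ringHom x : ℚ_[p])‖ = ‖x‖ := rfl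

lemma norm_factorial_qp (n : ℕ) :
    ‖(Nat.factorial n : ℚ_[p])‖ = (p : ℝ) ^ (-(padicValNat p (Nat.factorial n) : ℤ)) := by
  rw [Padic.norm_eq_zpow_neg_valuation (by exact_mod_cast n.factorial_ne_zero), Padic.valuation_natCast]

lemma norm_factorial_mul_choose (s : ℤ_[p]) (m : ℕ) :
    ‖(Nat.factorial (m+1) : ℤ_[p]) * Ring.choose s (m+1)‖ ≤ ‖s‖ := by
  have h : (Nat.factorial (m+1) : ℤ_[p]) * Ring.choose s (m+1)
      = (ascPochhammer ℤ_[p] (m+1)).eval (s - (m+1) + 1) := by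
    rw [← nsmul_eq_mul, Ring.choose, Ring.factorial_nsmul_multichoose_eq_ascPochhammer,
      Polynomial.ascPochhammer_smeval_eq_eval]
    congr 2
    push_cast
    ring
  rw [h, ascPochhammer_succ_right, Polynomial.eval_mul]
  have h2 : (Polynomial.X + (m : Polynomial ℤ_[p])).eval (s - (m+1) + 1) = s := by
    simp only [Polynomial.eval_add, Polynomial.eval_X, Polynomial.eval_natCast]
    push_cast
    ring
  rw [h2, norm_mul]
  exact mul_le_of_le_one_left (norm_nonneg _) (PadicInt.norm_le_one _)

variable (q : ℕ) (hq : q = if p = 2 then 4 else p)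

include hq in
lemma padicValNat_q : padicValNat p q = if p = 2 then 2 else 1 := by
  by_cases h2 : p = 2
  · subst h2; rw [hq]; norm_num
    rw [show (4:ℕ) = 2^2 by norm_num, padicValNat.prime_pow]
  · haveI : Fact (1 < p) := ⟨(Fact.out : p.Prime).one_lt⟩
    rw [if_neg h2, hq, if_neg h2]
    exact padicValNat_self

include hq in
lemma q_ne_zero : (q : ℚ_[p]) ≠ 0 := by
  have hp := (Fact.out : p.Prime)
  have : q ≠ 0 := by
    rcases eq_or_ne p 2 with h | h
    · simp [hq, h]
    · rw [hq, if_neg h]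
      exact hp.ne_zero
  exact_mod_cast this

include hq in
lemma norm_q : ‖(q : ℚ_[p])‖ = (p : ℝ) ^ (-((if p = 2 then 2 else 1 : ℕ)) : ℤ) := by
  rw [Padic.norm_eq_zpow_neg_valuation (q_ne_zero q hq), Padic.valuation_natCast, padicValNat_q q hq]

include hq in
lemma norm_q_lt_one : ‖(q : ℚ_[p])‖ < 1 := by
  rw [norm_q q hq]
  apply zpow_lt_one_of_neg₀
  · exact_mod_cast (Fact.out : p.Prime).one_lt
  · by_cases h2 : p = 2 <;> simp [h2]

include hq in
lemma norm_q_pos : 0 < ‖(q : ℚ_[p])‖ := norm_pos_iff.mpr (q_ne_zero q hq)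

include hq in
lemma bterm_bound (s : ℤ_[p]) {n : ℕ} (hn : 2 ≤ n) :
    ‖((Ring.choose s n : ℤ_[p]) : ℚ_[p]) * (q : ℚ_[p]) ^ n‖ ≤ ‖s‖ * ‖(q : ℚ_[p])‖ * (p : ℝ)⁻¹ := by
  have hp1 : (1:ℝ) < p := by exact_mod_cast (Fact.out : p.Prime).one_lt
  set e : ℕ := if p = 2 then 2 else 1 with he
  set v : ℕ := padicValNat p (Nat.factorial n) with hv
  obtain ⟨m, rfl⟩ : ∃ m, n = m + 1 := ⟨n - 1, by omega⟩
  have hch : ‖(Ring.choose s (m+1) : ℤ_[p])‖ ≤ ‖s‖ * (p:ℝ) ^ (v:ℤ) := by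
    have h1 := norm_factorial_mul_choose s m
    rw [norm_mul] at h1
    have h2 : ‖((m+1).factorial : ℤ_[p])‖ = (p : ℝ) ^ (-(v : ℤ)) := by
      rw [PadicInt.norm_def, PadicInt.coe_natCast]
      exact norm_factorial_qp _
    rw [h2] at h1
    calc ‖(Ring.choose s (m+1) : ℤ_[p])‖
        = ((p:ℝ) ^ (-(v:ℤ)) * ‖(Ring.choose s (m+1) : ℤ_[p])‖) * (p:ℝ) ^ (v:ℤ) := by
          rw [mul_comm ((p:ℝ)^(-(v:ℤ)))]
          rw [mul_assoc, ← zpow_add₀ (by positivity : (p:ℝ) ≠ 0)]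
          simp
      _ ≤ ‖s‖ * (p:ℝ) ^ (v:ℤ) := by
          apply mul_le_mul_of_nonneg_right h1 (by positivity)
  have harith : (p:ℝ) ^ (v:ℤ) * ‖(q : ℚ_[p])‖ ^ (m+1) ≤ ‖(q : ℚ_[p])‖ * (p:ℝ)⁻¹ := by
    rw [norm_q q hq, ← he, ← zpow_natCast ((p:ℝ) ^ (-(e:ℤ))), ← zpow_mul, ← zpow_add₀
      (by positivity : (p:ℝ) ≠ 0), show ((p:ℝ)⁻¹) = (p:ℝ) ^ (-1 : ℤ) by simp, ← zpow_add₀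
      (by positivity : (p:ℝ) ≠ 0)]
    apply zpow_le_zpow_right₀ hp1.le
    have hvm : v + 1 ≤ e * m := by
      have := val_factorial_le (p := p) (n := m + 1) hn e he
      rw [← hv] at this
      simpa using this
    have h3 : (v:ℤ) + 1 ≤ (e:ℤ) * (m:ℤ) := by exact_mod_cast hvm
    push_cast
    linarith [h3]
  calc ‖((Ring.choose s (m+1) : ℤ_[p]) : ℚ_[p]) * (q : ℚ_[p]) ^ (m+1)‖
      = ‖(Ring.choose s (m+1) : ℤ_[p])‖ * ‖(q : ℚ_[p])‖ ^ (m+1) := by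
        rw [norm_mul, norm_pow, PadicInt.norm_def]
    _ ≤ (‖s‖ * (p:ℝ) ^ (v:ℤ)) * ‖(q : ℚ_[p])‖ ^ (m+1) := by
        apply mul_le_mul_of_nonneg_right hch (by positivity)
    _ = ‖s‖ * ((p:ℝ) ^ (v:ℤ) * ‖(q : ℚ_[p])‖ ^ (m+1)) := by ring
    _ ≤ ‖s‖ * (‖(q : ℚ_[p])‖ * (p:ℝ)⁻¹) := by
        apply mul_le_mul_of_nonneg_left harith (norm_nonneg _)
    _ = ‖s‖ * ‖(q : ℚ_[p])‖ * (p : ℝ)⁻¹ := by ring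


noncomputable def gser (q : ℕ) : ℤ_[p] → ℚ_[p] := bseries PadicInt.Coe.ringHom (1 + q)

lemma u_sub_one : (1 + (q:ℚ_[p])) - 1 = (q:ℚ_[p]) := by ring

include hq in
lemma hu_q : ‖(1 + (q:ℚ_[p])) - 1‖ < 1 := by rw [u_sub_one]; exact norm_q_lt_one q hq

lemma hj_coe : ∀ x : ℤ_[p], ‖(PadicInt.Coe.ringHom x : ℚ_[p])‖ = ‖x‖ := fun _ => rfl

include hq in
lemma gser_add (s t : ℤ_[p]) : gser q (s + t) = gser q s * gser q t :=
  bseries_add hj_coe (hu_q q hq) s t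

include hq in
lemma gser_norm_one (s : ℤ_[p]) : ‖gser q s‖ = 1 := norm_bseries_eq_one hj_coe (hu_q q hq) s

include hq in
lemma gser_ne_zero (s : ℤ_[p]) : gser q s ≠ 0 := bseries_ne_zero hj_coe (hu_q q hq) s

lemma gser_natCast (n : ℕ) : gser q (n : ℤ_[p]) = (1 + (q:ℚ_[p])) ^ n :=
  bseries_natCast _ _ n

lemma gser_zero : gser q (0 : ℤ_[p]) = 1 := by
  have h : gser q ((0 : ℕ) : ℤ_[p]) = (1 + (q:ℚ_[p])) ^ (0:ℕ) := gser_natCast q 0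
  rw [Nat.cast_zero, pow_zero] at h
  exact h

include hq in
lemma continuous_gser : Continuous (gser (p := p) q) := continuous_bseries hj_coe (hu_q q hq)

include hq in
lemma gser_est (s : ℤ_[p]) :
    ‖gser q s - 1 - (s : ℚ_[p]) * (q : ℚ_[p])‖ ≤ ‖s‖ * ‖(q : ℚ_[p])‖ * (p : ℝ)⁻¹ := by
  classical
  set f : ℕ → ℚ_[p] := fun n => PadicInt.Coe.ringHom (Ring.choose s n) * ((1 + (q:ℚ_[p])) - 1) ^ n
    with hf
  have hsum : Summable f := bsummable hj_coe (hu_q q hq) s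
  have h0 : f 0 = 1 := by simp [hf, Ring.choose_zero_right]
  have h1 : f 1 = (s : ℚ_[p]) * (q : ℚ_[p]) := by
    rw [hf]
    simp only [Ring.choose_one_right, u_sub_one, pow_one]
    rfl
  have hsum1 : Summable fun n => f (n + 1) := by
    rwa [summable_nat_add_iff]
  have hsplit : gser q s = 1 + ((s : ℚ_[p]) * (q : ℚ_[p]) + ∑' n, f (n + 2)) := by
    rw [gser, bseries, ← hf, Summable.tsum_eq_zero_add hsum, h0, Summable.tsum_eq_zero_add hsum1, h1]
  rw [hsplit]
  have : 1 + ((s : ℚ_[p]) * (q : ℚ_[p]) + ∑' n, f (n + 2)) - 1 - (s : ℚ_[p]) * (q : ℚ_[p])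
      = ∑' n, f (n + 2) := by ring
  rw [this]
  refine IsUltrametricDist.norm_tsum_le_of_forall_le_of_nonneg ?_ fun n => ?_
  · have h1 := norm_q_pos q hq
    positivity
  · have := bterm_bound q hq s (n := n + 2) (by omega)
    simpa [hf, u_sub_one, hj_coe] using this

include hq in
lemma gser_sub_one_norm (s : ℤ_[p]) : ‖gser q s - 1‖ = ‖s‖ * ‖(q : ℚ_[p])‖ := by
  rcases eq_or_ne s 0 with rfl | hs
  · rw [gser_zero q]
    simp
  · have ha : ‖(s : ℚ_[p]) * (q : ℚ_[p])‖ = ‖s‖ * ‖(q : ℚ_[p])‖ := by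
      rw [norm_mul, PadicInt.norm_def]
    have hlt : ‖gser q s - 1 - (s : ℚ_[p]) * (q : ℚ_[p])‖ < ‖(s : ℚ_[p]) * (q : ℚ_[p])‖ := by
      refine lt_of_le_of_lt (gser_est q hq s) ?_
      rw [ha]
      have h1 : 0 < ‖s‖ := by
        rw [norm_pos_iff]; exact hs
      have h2 := norm_q_pos q hq
      have hp1 : (1:ℝ) < p := by exact_mod_cast (Fact.out : p.Prime).one_lt
      have hinv : (p:ℝ)⁻¹ < 1 := by
        rw [inv_lt_one_iff₀]; right; exact hp1
      calc ‖s‖ * ‖(q:ℚ_[p])‖ * (p:ℝ)⁻¹ < ‖s‖ * ‖(q:ℚ_[p])‖ * 1 := by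
            apply mul_lt_mul_of_pos_left hinv (by positivity)
        _ = ‖s‖ * ‖(q:ℚ_[p])‖ := mul_one _
    have hdecomp : gser q s - 1
        = (s : ℚ_[p]) * (q : ℚ_[p]) + (gser q s - 1 - (s : ℚ_[p]) * (q : ℚ_[p])) := by ring
    rw [hdecomp, ← ha]
    rw [IsUltrametricDist.norm_add_eq_max_of_norm_ne_norm (ne_of_gt hlt)]
    exact max_eq_left hlt.le

include hq in
lemma gser_dist (s t : ℤ_[p]) : ‖gser q s - gser q t‖ = ‖s - t‖ * ‖(q : ℚ_[p])‖ := by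
  have : gser q s - gser q t = gser q t * (gser q (s - t) - 1) := by
    rw [mul_sub, ← gser_add q hq, mul_one]
    congr 2
    ring
  rw [this, norm_mul, gser_norm_one q hq, one_mul, gser_sub_one_norm q hq]

-- the unit-valued version
noncomputable def gZ (q : ℕ) (hq : q = if p = 2 then 4 else p) (s : ℤ_[p]) : ℤ_[p] :=
  ⟨gser q s, (gser_norm_one q hq s).le⟩

include hq in
lemma isUnit_gZ (s : ℤ_[p]) : IsUnit (gZ q hq s) := by
  rw [PadicInt.isUnit_iff]
  exact gser_norm_one q hq s

noncomputable def gU (q : ℕ) (hq : q = if p = 2 then 4 else p) (s : ℤ_[p]) : ℤ_[p]ˣ :=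
  (isUnit_gZ q hq s).unit

include hq in
lemma gU_coe (s : ℤ_[p]) : ((gU q hq s : ℤ_[p]) : ℚ_[p]) = gser q s := by
  have h : (gU q hq s : ℤ_[p]) = gZ q hq s := (isUnit_gZ q hq s).unit_spec
  rw [h]
  rfl

include hq in
lemma gU_add (s t : ℤ_[p]) : gU q hq (s + t) = gU q hq s * gU q hq t := by
  apply Units.ext
  apply Subtype.ext
  rw [gU_coe q hq, Units.val_mul, PadicInt.coe_mul, gU_coe q hq, gU_coe q hq]
  exact gser_add q hq s t

include hq in
lemma gU_zero : gU q hq 0 = 1 := by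
  apply Units.ext; apply Subtype.ext
  rw [gU_coe q hq]
  simpa using gser_zero q

include hq in
lemma gU_inj {s t : ℤ_[p]} (h : gU q hq s = gU q hq t) : s = t := by
  have h2 : gser q s = gser q t := by
    rw [← gU_coe q hq, ← gU_coe q hq, h]
  have := gser_dist q hq s t
  rw [h2, sub_self, norm_zero] at this
  have h3 := norm_q_pos q hq
  have h4 : ‖s - t‖ = 0 := by
    rcases mul_eq_zero.mp this.symm with h | h
    · exact h
    · exact absurd h (ne_of_gt h3)
  rw [norm_eq_zero] at h4
  exact sub_eq_zero.mp h4

include hq in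
lemma gU_mem (s : ℤ_[p]) : ‖((gU q hq s : ℤ_[p]) : ℚ_[p]) - 1‖ ≤ ‖(q : ℚ_[p])‖ := by
  rw [gU_coe q hq, gser_sub_one_norm q hq]
  exact mul_le_of_le_one_left (norm_nonneg _) (PadicInt.norm_le_one s)

include hq in
lemma gU_surj (y : ℤ_[p]ˣ) (hy : ‖((y : ℤ_[p]) : ℚ_[p]) - 1‖ ≤ ‖(q : ℚ_[p])‖) :
    ∃ s : ℤ_[p], gU q hq s = y := by
  have hp1 : (1:ℝ) < p := by exact_mod_cast (Fact.out : p.Prime).one_lt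
  have hqpos := norm_q_pos q hq
  have key : ∀ k : ℕ, ∃ s : ℤ_[p],
      ‖((y : ℤ_[p]) : ℚ_[p]) - gser q s‖ ≤ ‖(q : ℚ_[p])‖ * (p : ℝ) ^ (-(k : ℤ)) := by
    intro k
    induction k with
    | zero =>
      refine ⟨0, ?_⟩
      rw [gser_zero q]
      simpa using hy
    | succ k ih =>
      obtain ⟨s, hs⟩ := ih
      set Y : ℚ_[p] := ((y : ℤ_[p]) : ℚ_[p]) with hY
      set c : ℚ_[p] := (Y - gser q s) / (gser q s * (q : ℚ_[p])) with hc
      have hgne := gser_ne_zero q hq s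
      have hqne := q_ne_zero q hq
      have hcnorm : ‖c‖ ≤ (p : ℝ) ^ (-(k : ℤ)) := by
        rw [hc, norm_div, norm_mul, gser_norm_one q hq, one_mul, div_le_iff₀ hqpos]
        calc ‖Y - gser q s‖ ≤ ‖(q : ℚ_[p])‖ * (p : ℝ) ^ (-(k : ℤ)) := hs
          _ = (p : ℝ) ^ (-(k : ℤ)) * ‖(q : ℚ_[p])‖ := by ring
      have hc1 : ‖c‖ ≤ 1 := by
        refine hcnorm.trans ?_
        apply zpow_le_one_of_nonpos₀ hp1.le
        simp
      refine ⟨s + ⟨c, hc1⟩, ?_⟩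
      set δ : ℤ_[p] := ⟨c, hc1⟩ with hδ
      have hδc : (δ : ℚ_[p]) = c := rfl
      have hYeq : Y = gser q s + c * (gser q s * (q : ℚ_[p])) := by
        rw [hc]
        field_simp
        ring
      have hexp : Y - gser q (s + δ) = -(gser q s * (gser q δ - 1 - (δ : ℚ_[p]) * (q : ℚ_[p]))) := by
        rw [gser_add q hq, hδc, hYeq]
        ring
      rw [hexp, norm_neg, norm_mul, gser_norm_one q hq, one_mul]
      refine (gser_est q hq δ).trans ?_
      have hδn : ‖δ‖ ≤ (p : ℝ) ^ (-(k : ℤ)) := hcnorm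
      calc ‖δ‖ * ‖(q : ℚ_[p])‖ * (p : ℝ)⁻¹
          ≤ (p : ℝ) ^ (-(k : ℤ)) * ‖(q : ℚ_[p])‖ * (p : ℝ)⁻¹ := by
            apply mul_le_mul_of_nonneg_right (mul_le_mul_of_nonneg_right hδn hqpos.le) (by positivity)
        _ = ‖(q : ℚ_[p])‖ * (p : ℝ) ^ (-((k+1) : ℤ)) := by
            rw [show ((p:ℝ))⁻¹ = (p:ℝ) ^ (-1 : ℤ) by simp]
            rw [mul_comm ((p:ℝ) ^ (-(k:ℤ)))]
            rw [mul_assoc, ← zpow_add₀ (by positivity : (p:ℝ) ≠ 0)]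
            congr 2
            ring
        _ = ‖(q : ℚ_[p])‖ * (p : ℝ) ^ (-((k:ℕ)+1 : ℕ) : ℤ) := by norm_cast
  have hcls : ((y : ℤ_[p]) : ℚ_[p]) ∈ closure (Set.range (gser (p := p) q)) := by
    rw [Metric.mem_closure_iff]
    intro ε hε
    have htend : Filter.Tendsto (fun k : ℕ => ‖(q : ℚ_[p])‖ * (p : ℝ) ^ (-(k : ℤ)))
        Filter.atTop (nhds 0) := by
      have h2 : Filter.Tendsto (fun k : ℕ => ((p : ℝ)⁻¹) ^ k) Filter.atTop (nhds 0) := by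
        apply tendsto_pow_atTop_nhds_zero_of_lt_one (by positivity)
        rw [inv_lt_one_iff₀]; right; exact hp1
      have h3 : (fun k : ℕ => ‖(q : ℚ_[p])‖ * (p : ℝ) ^ (-(k : ℤ)))
          = fun k : ℕ => ‖(q : ℚ_[p])‖ * ((p : ℝ)⁻¹) ^ k := by
        funext k
        rw [zpow_neg, zpow_natCast, ← inv_pow]
      rw [h3]
      simpa using h2.const_mul ‖(q : ℚ_[p])‖
    obtain ⟨k, hk⟩ := (htend.eventually (eventually_lt_nhds hε)).exists
    obtain ⟨s, hs⟩ := key k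
    exact ⟨gser q s, Set.mem_range_self s, by
      rw [dist_eq_norm]
      exact lt_of_le_of_lt hs hk⟩
  have hclosed : IsClosed (Set.range (gser (p := p) q)) :=
    (isCompact_range (continuous_gser q hq)).isClosed
  rw [hclosed.closure_eq] at hcls
  obtain ⟨s, hs⟩ := hcls
  refine ⟨s, Units.ext (Subtype.ext ?_)⟩
  rw [gU_coe q hq, hs]


-- stage 6 : decomposition x = t * gU s
include hq in
lemma gU_natCast_mul (n : ℕ) (s : ℤ_[p]) :
    gU q hq ((n : ℤ_[p]) * s) = gU q hq s ^ n := by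
  induction n with
  | zero => simpa using gU_zero q hq
  | succ n ih =>
    have : ((n + 1 : ℕ) : ℤ_[p]) * s = (n : ℤ_[p]) * s + s := by push_cast; ring
    rw [this, gU_add q hq, ih, pow_succ]

include hq in
lemma gU_neg (s : ℤ_[p]) : gU q hq (-s) = (gU q hq s)⁻¹ := by
  have h : gU q hq (-s) * gU q hq s = 1 := by
    rw [← gU_add q hq]
    simpa using gU_zero q hq
  exact eq_inv_of_mul_eq_one_left h

include hq in
lemma gU_torsion_eq_zero {s : ℤ_[p]} (h : IsOfFinOrder (gU q hq s)) : s = 0 := by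
  obtain ⟨n, hn, hpow⟩ := isOfFinOrder_iff_pow_eq_one.mp h
  have h1 : gU q hq ((n : ℤ_[p]) * s) = gU q hq 0 := by
    rw [gU_natCast_mul q hq, hpow, gU_zero q hq]
  have h2 : (n : ℤ_[p]) * s = 0 := gU_inj q hq h1
  have h3 : (n : ℤ_[p]) ≠ 0 := Nat.cast_ne_zero.mpr hn.ne'
  exact (mul_eq_zero.mp h2).resolve_left h3

include hq in
lemma decomp_unique {t t' : ℤ_[p]ˣ} {s s' : ℤ_[p]}
    (ht : t ∈ CommGroup.torsion ℤ_[p]ˣ) (ht' : t' ∈ CommGroup.torsion ℤ_[p]ˣ)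
    (h : t * gU q hq s = t' * gU q hq s') : t = t' ∧ s = s' := by
  have h1 : t'⁻¹ * t * gU q hq s = gU q hq s' := by
    rw [mul_assoc, h]
    group
  have hτ : t'⁻¹ * t = gU q hq (s' - s) := by
    rw [sub_eq_add_neg, gU_add q hq, gU_neg q hq, ← h1]
    group
  have hτt : t'⁻¹ * t ∈ CommGroup.torsion ℤ_[p]ˣ :=
    (CommGroup.torsion ℤ_[p]ˣ).mul_mem ((CommGroup.torsion ℤ_[p]ˣ).inv_mem ht') ht
  rw [hτ] at hτt
  have hs : s' - s = 0 := gU_torsion_eq_zero q hq (CommGroup.mem_torsion _ |>.mp hτt)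
  have hss : s = s' := (sub_eq_zero.mp hs).symm
  constructor
  · rw [hss] at h
    exact mul_right_cancel h
  · exact hss

-- Fermat type statements
private lemma zmod2_eq_one_of_isUnit : ∀ a : ZMod 2, IsUnit a → a = 1 := by decide
private lemma zmod2_eq_one_of_ne_zero : ∀ a : ZMod 2, a ≠ 0 → a = 1 := by decide
lemma unit_norm_coe (x : ℤ_[p]ˣ) : ‖((x : ℤ_[p]) : ℚ_[p])‖ = 1 := by
  rw [← PadicInt.norm_def]
  exact PadicInt.norm_units x

include hq in
lemma exists_decomp (x : ℤ_[p]ˣ) :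
    ∃ t s, t ∈ CommGroup.torsion ℤ_[p]ˣ ∧ x = t * gU q hq s := by
  by_cases hp2 : p = 2
  · -- p = 2 : x or -x is ≡ 1 mod 4
    subst hp2
    have hq4 : q = 4 := by rw [hq]; norm_num
    have hx1 : PadicInt.toZMod ((x : ℤ_[2]) - 1) = 0 := by
      have hu : IsUnit (PadicInt.toZMod (x : ℤ_[2])) :=
        (x.isUnit.map PadicInt.toZMod)
      rw [map_sub, map_one, zmod2_eq_one_of_isUnit _ hu, sub_self]
    have hdvd : (2 : ℤ_[2]) ∣ ((x : ℤ_[2]) - 1) := by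
      have := (RingHom.mem_ker (f := PadicInt.toZMod)).mpr hx1
      rw [PadicInt.ker_toZMod, PadicInt.maximalIdeal_eq_span_p, Ideal.mem_span_singleton] at this
      exact_mod_cast this
    obtain ⟨b, hb⟩ := hdvd
    rcases eq_or_ne (PadicInt.toZMod b) 0 with hb0 | hb0
    · -- b even : x ≡ 1 mod 4
      have hdvd2 : (2 : ℤ_[2]) ∣ b := by
        have := (RingHom.mem_ker (f := PadicInt.toZMod)).mpr hb0
        rwa [PadicInt.ker_toZMod, PadicInt.maximalIdeal_eq_span_p,
          Ideal.mem_span_singleton] at this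
      obtain ⟨c, hc⟩ := hdvd2
      have hnorm : ‖((x : ℤ_[2]) : ℚ_[2]) - 1‖ ≤ ‖(q : ℚ_[2])‖ := by
        have hmem : (x : ℤ_[2]) - 1 ∈ Ideal.span {(2 : ℤ_[2]) ^ 2} := by
          rw [Ideal.mem_span_singleton]
          refine ⟨c, ?_⟩
          linear_combination hb + 2 * hc
        calc ‖((x : ℤ_[2]) : ℚ_[2]) - 1‖ = ‖(((x : ℤ_[2]) - 1 : ℤ_[2]) : ℚ_[2])‖ := by
              push_cast
              ring_nf
          _ ≤ (2:ℝ) ^ (-(2:ℕ):ℤ) := by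
              rw [← PadicInt.norm_def]
              exact_mod_cast (PadicInt.norm_le_pow_iff_mem_span_pow ((x : ℤ_[2]) - 1) 2).mpr hmem
          _ = ‖(q : ℚ_[2])‖ := by
              rw [norm_q q hq]
              norm_num
      obtain ⟨s, hs⟩ := gU_surj q hq x hnorm
      exact ⟨1, s, Subgroup.one_mem _, by rw [hs, one_mul]⟩
    · -- b odd : -x ≡ 1 mod 4
      have hb1 : PadicInt.toZMod b = 1 := zmod2_eq_one_of_ne_zero _ hb0
      have hdvd2 : (2 : ℤ_[2]) ∣ (b + 1) := by
        have h0 : PadicInt.toZMod (b + 1) = 0 := by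
          rw [map_add, map_one, hb1]
          rfl
        have := (RingHom.mem_ker (f := PadicInt.toZMod)).mpr h0
        rwa [PadicInt.ker_toZMod, PadicInt.maximalIdeal_eq_span_p,
          Ideal.mem_span_singleton] at this
      obtain ⟨c, hc⟩ := hdvd2
      set y : ℤ_[2]ˣ := (-1 : ℤ_[2]ˣ) * x with hy
      have hyv : (y : ℤ_[2]) = -(x : ℤ_[2]) := by
        rw [hy, Units.val_mul]
        simp
      have hnorm : ‖((y : ℤ_[2]) : ℚ_[2]) - 1‖ ≤ ‖(q : ℚ_[2])‖ := by
        have hmem : (y : ℤ_[2]) - 1 ∈ Ideal.span {(2 : ℤ_[2]) ^ 2} := by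
          rw [Ideal.mem_span_singleton, hyv]
          refine ⟨-c, ?_⟩
          linear_combination (-1 : ℤ_[2]) * hb + (-2 : ℤ_[2]) * hc
        calc ‖((y : ℤ_[2]) : ℚ_[2]) - 1‖ = ‖(((y : ℤ_[2]) - 1 : ℤ_[2]) : ℚ_[2])‖ := by
              push_cast
              ring_nf
          _ ≤ (2:ℝ) ^ (-(2:ℕ):ℤ) := by
              rw [← PadicInt.norm_def]
              exact_mod_cast (PadicInt.norm_le_pow_iff_mem_span_pow ((y : ℤ_[2]) - 1) 2).mpr hmem
          _ = ‖(q : ℚ_[2])‖ := by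
              rw [norm_q q hq]
              norm_num
      obtain ⟨s, hs⟩ := gU_surj q hq y hnorm
      refine ⟨-1, s, ?_, ?_⟩
      · rw [CommGroup.mem_torsion]
        refine isOfFinOrder_iff_pow_eq_one.mpr ⟨2, by norm_num, ?_⟩
        ext
        simp
      · rw [hs, hy, ← mul_assoc]
        simp
  · -- p odd
    set m : ℕ := p - 1 with hm
    have hp := (Fact.out : p.Prime)
    have hp2le : 2 ≤ p := hp.two_le
    have hm1 : 1 ≤ m := by omega
    have hxm : PadicInt.toZMod ((x : ℤ_[p]) ^ m - 1) = 0 := by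
      rw [map_sub, map_pow, map_one]
      have hne : PadicInt.toZMod (x : ℤ_[p]) ≠ 0 :=
        (x.isUnit.map PadicInt.toZMod).ne_zero
      rw [ZMod.pow_card_sub_one_eq_one hne, sub_self]
    have hnorm : ‖(((x ^ m : ℤ_[p]ˣ) : ℤ_[p]) : ℚ_[p]) - 1‖ ≤ ‖(q : ℚ_[p])‖ := by
      have hmem : (x : ℤ_[p]) ^ m - 1 ∈ Ideal.span {(p : ℤ_[p]) ^ 1} := by
        rw [pow_one, ← PadicInt.maximalIdeal_eq_span_p, ← PadicInt.ker_toZMod]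
        exact (RingHom.mem_ker (f := PadicInt.toZMod)).mpr hxm
      have hxv : (((x ^ m : ℤ_[p]ˣ) : ℤ_[p]) : ℚ_[p]) = (((x : ℤ_[p]) ^ m : ℤ_[p]) : ℚ_[p]) := by
        norm_cast
      rw [hxv]
      calc ‖(((x : ℤ_[p]) ^ m : ℤ_[p]) : ℚ_[p]) - 1‖
          = ‖(((x : ℤ_[p]) ^ m - 1 : ℤ_[p]) : ℚ_[p])‖ := by
            push_cast
            ring_nf
        _ ≤ (p:ℝ) ^ (-(1:ℕ):ℤ) := by
            rw [← PadicInt.norm_def]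
            exact_mod_cast (PadicInt.norm_le_pow_iff_mem_span_pow ((x : ℤ_[p]) ^ m - 1) 1).mpr hmem
        _ = ‖(q : ℚ_[p])‖ := by
            rw [norm_q q hq, if_neg hp2]
    obtain ⟨s₀, hs₀⟩ := gU_surj q hq (x ^ m) hnorm
    -- m is invertible in ℤ_[p]
    have hmunit : IsUnit ((m : ℕ) : ℤ_[p]) := by
      rw [PadicInt.isUnit_iff]
      have hnd : ¬ ((p : ℤ) ∣ (m : ℤ)) := by
        rw [Int.natCast_dvd_natCast]
        intro hdvd
        have := Nat.le_of_dvd (by omega) hdvd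
        omega
      have h1 := (PadicInt.norm_int_lt_one_iff_dvd (m : ℤ)).not.mpr hnd
      push_neg at h1
      have h2 : ((m : ℤ) : ℤ_[p]) = ((m : ℕ) : ℤ_[p]) := by push_cast; rfl
      rw [h2] at h1
      exact le_antisymm (PadicInt.norm_le_one _) h1
    set mu : ℤ_[p]ˣ := hmunit.unit with hmu
    set s : ℤ_[p] := ((mu⁻¹ : ℤ_[p]ˣ) : ℤ_[p]) * s₀ with hsdef
    have hms : ((m : ℕ) : ℤ_[p]) * s = s₀ := by
      rw [hsdef, ← mul_assoc]
      have : ((m : ℕ) : ℤ_[p]) * ((mu⁻¹ : ℤ_[p]ˣ) : ℤ_[p]) = ((mu * mu⁻¹ : ℤ_[p]ˣ) : ℤ_[p]) := by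
        rw [Units.val_mul, hmu, IsUnit.unit_spec]
      rw [this, mul_inv_cancel]
      simp
    refine ⟨x * (gU q hq s)⁻¹, s, ?_, by group⟩
    rw [CommGroup.mem_torsion]
    refine isOfFinOrder_iff_pow_eq_one.mpr ⟨m, by omega, ?_⟩
    rw [mul_pow, inv_pow, ← gU_natCast_mul q hq, hms, hs₀]
    simp


-- stage 7 : decomposition functions
include hq in
lemma gU_one (u₀ : ℤ_[p]ˣ) (hu₀ : (u₀ : ℤ_[p]) = 1 + q) : gU q hq 1 = u₀ := by
  apply Units.ext; apply Subtype.ext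
  rw [gU_coe q hq]
  have h : gser q ((1:ℕ) : ℤ_[p]) = (1 + (q:ℚ_[p]))^(1:ℕ) := gser_natCast q 1
  rw [Nat.cast_one, pow_one] at h
  rw [h, hu₀]
  push_cast
  ring

noncomputable def Tf (q : ℕ) (hq : q = if p = 2 then 4 else p) (x : ℤ_[p]ˣ) : ℤ_[p]ˣ :=
  (exists_decomp q hq x).choose

noncomputable def Sf (q : ℕ) (hq : q = if p = 2 then 4 else p) (x : ℤ_[p]ˣ) : ℤ_[p] :=
  (exists_decomp q hq x).choose_spec.choose

lemma Tf_mem (x : ℤ_[p]ˣ) : Tf q hq x ∈ CommGroup.torsion ℤ_[p]ˣ :=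
  (exists_decomp q hq x).choose_spec.choose_spec.1

lemma decomp_eq (x : ℤ_[p]ˣ) : x = Tf q hq x * gU q hq (Sf q hq x) :=
  (exists_decomp q hq x).choose_spec.choose_spec.2

include hq in
lemma decomp_eq_iff {x t : ℤ_[p]ˣ} {s : ℤ_[p]} (ht : t ∈ CommGroup.torsion ℤ_[p]ˣ)
    (h : x = t * gU q hq s) : Tf q hq x = t ∧ Sf q hq x = s :=
  decomp_unique q hq (Tf_mem q hq x) ht ((decomp_eq q hq x).symm.trans h)

include hq in
lemma Tf_mul (x y : ℤ_[p]ˣ) : Tf q hq (x * y) = Tf q hq x * Tf q hq y ∧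
    Sf q hq (x * y) = Sf q hq x + Sf q hq y := by
  have h : x * y = (Tf q hq x * Tf q hq y) * gU q hq (Sf q hq x + Sf q hq y) := by
    rw [gU_add q hq]
    calc x * y = (Tf q hq x * gU q hq (Sf q hq x)) * (Tf q hq y * gU q hq (Sf q hq y)) := by
          rw [← decomp_eq q hq, ← decomp_eq q hq]
      _ = (Tf q hq x * Tf q hq y) * (gU q hq (Sf q hq x) * gU q hq (Sf q hq y)) :=
          mul_mul_mul_comm _ _ _ _
  exact decomp_eq_iff q hq
    ((CommGroup.torsion ℤ_[p]ˣ).mul_mem (Tf_mem q hq x) (Tf_mem q hq y)) h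

include hq in
lemma Tf_u₀ (u₀ : ℤ_[p]ˣ) (hu₀ : (u₀ : ℤ_[p]) = 1 + q) :
    Tf q hq u₀ = 1 ∧ Sf q hq u₀ = 1 := by
  apply decomp_eq_iff q hq (Subgroup.one_mem _)
  rw [gU_one q hq u₀ hu₀, one_mul]

include hq in
lemma Tf_torsion {t : ℤ_[p]ˣ} (ht : t ∈ CommGroup.torsion ℤ_[p]ˣ) :
    Tf q hq t = t ∧ Sf q hq t = 0 := by
  apply decomp_eq_iff q hq ht
  rw [gU_zero q hq, mul_one]

include hq in
lemma Tf_one : Tf q hq 1 = 1 ∧ Sf q hq 1 = 0 := Tf_torsion q hq (Subgroup.one_mem _)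

lemma unit_coe_ne_zero (y : ℤ_[p]ˣ) : ((y : ℤ_[p]) : ℚ_[p]) ≠ 0 := by
  intro h0
  have := unit_norm_coe y
  rw [h0, norm_zero] at this
  norm_num at this

lemma unit_inv_coe (y : ℤ_[p]ˣ) :
    (((y⁻¹ : ℤ_[p]ˣ) : ℤ_[p]) : ℚ_[p]) = (((y : ℤ_[p]) : ℚ_[p]))⁻¹ := by
  apply eq_inv_of_mul_eq_one_left
  have h1 : ((y⁻¹ * y : ℤ_[p]ˣ) : ℤ_[p]) = 1 := by simp
  calc (((y⁻¹ : ℤ_[p]ˣ) : ℤ_[p]) : ℚ_[p]) * ((y : ℤ_[p]) : ℚ_[p])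
      = (((y⁻¹ * y : ℤ_[p]ˣ) : ℤ_[p]) : ℚ_[p]) := by push_cast [Units.val_mul]; ring
    _ = 1 := by rw [h1]; norm_num

include hq in
lemma decomp_coe (x : ℤ_[p]ˣ) : ((x : ℤ_[p]) : ℚ_[p])
    = (((Tf q hq x : ℤ_[p]ˣ) : ℤ_[p]) : ℚ_[p]) * gser q (Sf q hq x) := by
  conv_lhs => rw [decomp_eq q hq x]
  rw [← gU_coe q hq]
  push_cast [Units.val_mul]
  ring

include hq in
lemma Tf_eq_of_close {x y : ℤ_[p]ˣ}
    (h : ‖((x : ℤ_[p]) : ℚ_[p]) - ((y : ℤ_[p]) : ℚ_[p])‖ ≤ ‖(q : ℚ_[p])‖) :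
    Tf q hq x = Tf q hq y := by
  set X : ℚ_[p] := ((x : ℤ_[p]) : ℚ_[p]) with hX
  set Y : ℚ_[p] := ((y : ℤ_[p]) : ℚ_[p]) with hY
  set TX : ℚ_[p] := (((Tf q hq x : ℤ_[p]ˣ) : ℤ_[p]) : ℚ_[p]) with hTX
  set TY : ℚ_[p] := (((Tf q hq y : ℤ_[p]ˣ) : ℤ_[p]) : ℚ_[p]) with hTY
  set GX : ℚ_[p] := gser q (Sf q hq x) with hGX
  set GY : ℚ_[p] := gser q (Sf q hq y) with hGY
  set G : ℚ_[p] := gser q (Sf q hq y - Sf q hq x) with hG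
  have hx : X = TX * GX := decomp_coe q hq x
  have hy : Y = TY * GY := decomp_coe q hq y
  have hGmul : G * GX = GY := by
    rw [hG, hGX, hGY, ← gser_add q hq]
    congr 1
    ring
  have hGXne : GX ≠ 0 := gser_ne_zero q hq _
  have hGYne : GY ≠ 0 := gser_ne_zero q hq _
  have hYne : Y ≠ 0 := unit_coe_ne_zero y
  have hTYne : TY ≠ 0 := by
    intro h0
    rw [h0, zero_mul] at hy
    exact hYne hy
  have hGne : G ≠ 0 := gser_ne_zero q hq _
  have hval : TX * TY⁻¹ = X * Y⁻¹ * G := by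
    rw [hx, hy, ← hGmul]
    field_simp
  have hsplit : TX * TY⁻¹ - 1 = (X - Y) * Y⁻¹ * G + (G - 1) := by
    rw [hval]
    field_simp
    ring
  have hnorm1 : ‖TX * TY⁻¹ - 1‖ ≤ ‖(q : ℚ_[p])‖ := by
    rw [hsplit]
    refine (IsUltrametricDist.norm_add_le_max _ _).trans (max_le ?_ ?_)
    · rw [norm_mul, norm_mul, norm_inv, hY, unit_norm_coe, hG, gser_norm_one q hq]
      simpa using h
    · rw [hG, gser_sub_one_norm q hq]
      exact mul_le_of_le_one_left (norm_nonneg _) (PadicInt.norm_le_one _)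
  set τ : ℤ_[p]ˣ := Tf q hq x * (Tf q hq y)⁻¹ with hτdef
  have hτv : ((τ : ℤ_[p]) : ℚ_[p]) = TX * TY⁻¹ := by
    rw [hτdef, Units.val_mul, PadicInt.coe_mul, unit_inv_coe, hTX, hTY]
  have hτnorm : ‖((τ : ℤ_[p]) : ℚ_[p]) - 1‖ ≤ ‖(q : ℚ_[p])‖ := by
    rw [hτv]; exact hnorm1
  obtain ⟨s, hs⟩ := gU_surj q hq τ hτnorm
  have hτtor : τ ∈ CommGroup.torsion ℤ_[p]ˣ :=
    (CommGroup.torsion ℤ_[p]ˣ).mul_mem (Tf_mem q hq x)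
      ((CommGroup.torsion ℤ_[p]ˣ).inv_mem (Tf_mem q hq y))
  have hs0 : s = 0 := by
    apply gU_torsion_eq_zero q hq
    rw [hs]
    exact (CommGroup.mem_torsion _).mp hτtor
  have hτ1 : τ = 1 := by rw [← hs, hs0, gU_zero q hq]
  rw [hτdef, mul_inv_eq_one] at hτ1
  exact hτ1

include hq in
lemma Sf_dist_eq {x y : ℤ_[p]ˣ}
    (h : ‖((x : ℤ_[p]) : ℚ_[p]) - ((y : ℤ_[p]) : ℚ_[p])‖ ≤ ‖(q : ℚ_[p])‖) :
    ‖Sf q hq x - Sf q hq y‖ * ‖(q : ℚ_[p])‖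
      = ‖((x : ℤ_[p]) : ℚ_[p]) - ((y : ℤ_[p]) : ℚ_[p])‖ := by
  have hT := Tf_eq_of_close q hq h
  set X : ℚ_[p] := ((x : ℤ_[p]) : ℚ_[p]) with hX
  set Y : ℚ_[p] := ((y : ℤ_[p]) : ℚ_[p]) with hY
  set TX : ℚ_[p] := (((Tf q hq x : ℤ_[p]ˣ) : ℤ_[p]) : ℚ_[p]) with hTX
  set GX : ℚ_[p] := gser q (Sf q hq x) with hGX
  set GY : ℚ_[p] := gser q (Sf q hq y) with hGY
  have hx : X = TX * GX := decomp_coe q hq x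
  have hy : Y = TX * GY := by
    have := decomp_coe q hq y
    rw [← hT] at this
    exact this
  have hXY : X - Y = TX * (GX - GY) := by rw [hx, hy]; ring
  calc ‖Sf q hq x - Sf q hq y‖ * ‖(q : ℚ_[p])‖
      = ‖GX - GY‖ := (gser_dist q hq _ _).symm
    _ = ‖TX‖ * ‖GX - GY‖ := by rw [hTX, unit_norm_coe, one_mul]
    _ = ‖X - Y‖ := by rw [hXY, norm_mul]


end QP

-- stage 8 : the K-side
section KSide

variable {K : Type*} [NormedField K] [CompleteSpace K] [IsUltrametricDist K]
variable (ι : ℚ_[p] →+* K) (hι : ∀ x, ‖ι x‖ = ‖x‖)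

include hι in
lemma hjK : ∀ x : ℤ_[p], ‖(ι.comp PadicInt.Coe.ringHom) x‖ = ‖x‖ := fun x => by
  rw [RingHom.comp_apply, hι]
  rfl

include hι in
lemma norm_natCast_K_le_one (n : ℕ) : ‖(n : K)‖ ≤ 1 := by
  have h1 : ((n : ℚ_[p]) : ℚ_[p]) = ((n : ℤ_[p]) : ℚ_[p]) := by push_cast; rfl
  rw [← map_natCast ι n, hι, h1, ← PadicInt.norm_def]
  exact PadicInt.norm_le_one _

include hι in
lemma norm_choose_K_le (k : ℕ) (hk0 : k ≠ 0) (hkp : k < p) :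
    ‖(Nat.choose p k : K)‖ ≤ (p : ℝ)⁻¹ := by
  obtain ⟨t, ht⟩ := (Fact.out : p.Prime).dvd_choose_self hk0 hkp
  rw [ht]
  push_cast
  rw [norm_mul]
  calc ‖(p : K)‖ * ‖(t : K)‖ ≤ ‖(p : K)‖ * 1 :=
        mul_le_mul_of_nonneg_left (norm_natCast_K_le_one ι hι t) (norm_nonneg _)
    _ = ‖(p : K)‖ := mul_one _
    _ = (p : ℝ)⁻¹ := by
        rw [← map_natCast ι p, hι]
        exact Padic.norm_p

include hι in
lemma norm_pow_p_sub_one {d : K} (hd : 1 ≤ ‖d - 1‖) : ‖d ^ p - 1‖ = ‖d - 1‖ ^ p := by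
  have hp := (Fact.out : p.Prime)
  have hp2 : 2 ≤ p := hp.two_le
  have hd0 : (0:ℝ) < ‖d - 1‖ := lt_of_lt_of_le one_pos hd
  -- binomial expansion
  have hbin : d ^ p = ∑ k ∈ Finset.range (p + 1), (d - 1) ^ k * (Nat.choose p k : K) := by
    have h := add_pow (d - 1) 1 p
    simp only [one_pow, mul_one, sub_add_cancel] at h
    exact h
  have hsplit : d ^ p - 1 = (d - 1) ^ p
      + ∑ i ∈ Finset.range (p - 1), (d - 1) ^ (i + 1) * (Nat.choose p (i + 1) : K) := by
    rw [hbin, Finset.sum_range_succ, Nat.choose_self]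
    have hp1 : p = (p - 1) + 1 := by omega
    rw [show (Finset.range p) = Finset.range ((p-1)+1) from by rw [← hp1]]
    rw [Finset.sum_range_succ']
    simp only [pow_zero, Nat.choose_zero_right, Nat.cast_one, one_mul, mul_one]
    ring
  have hterm : ∀ i ∈ Finset.range (p - 1),
      ‖(d - 1) ^ (i + 1) * (Nat.choose p (i + 1) : K)‖ ≤ ‖d - 1‖ ^ (p - 1) * (p:ℝ)⁻¹ := by
    intro i hi
    rw [Finset.mem_range] at hi
    rw [norm_mul, norm_pow]
    apply mul_le_mul
    · exact pow_le_pow_right₀ hd (by omega)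
    · exact norm_choose_K_le ι hι (i + 1) (by omega) (by omega)
    · exact norm_nonneg _
    · positivity
  have hsum : ‖∑ i ∈ Finset.range (p - 1), (d - 1) ^ (i + 1) * (Nat.choose p (i + 1) : K)‖
      ≤ ‖d - 1‖ ^ (p - 1) * (p:ℝ)⁻¹ := by
    apply IsUltrametricDist.norm_sum_le_of_forall_le_of_nonneg
    · positivity
    · exact hterm
  have hlt : ‖d - 1‖ ^ (p - 1) * (p:ℝ)⁻¹ < ‖d - 1‖ ^ p := by
    have h1 : (p:ℝ)⁻¹ < 1 := by
      rw [inv_lt_one_iff₀]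
      right
      exact_mod_cast hp.one_lt
    calc ‖d - 1‖ ^ (p - 1) * (p:ℝ)⁻¹ < ‖d - 1‖ ^ (p - 1) * 1 := by
          apply mul_lt_mul_of_pos_left h1 (by positivity)
      _ = ‖d - 1‖ ^ (p - 1) := mul_one _
      _ ≤ ‖d - 1‖ ^ (p - 1) * ‖d - 1‖ := le_mul_of_one_le_right (by positivity) hd
      _ = ‖d - 1‖ ^ p := by
          rw [← pow_succ]
          congr 1
          omega
  have hlt2 : ‖∑ i ∈ Finset.range (p - 1), (d - 1) ^ (i + 1) * (Nat.choose p (i + 1) : K)‖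
      < ‖(d - 1) ^ p‖ := by
    rw [norm_pow]
    exact lt_of_le_of_lt hsum hlt
  rw [hsplit, IsUltrametricDist.norm_add_eq_max_of_norm_ne_norm (ne_of_gt hlt2),
    max_eq_left hlt2.le, norm_pow]

include hι in
lemma norm_sub_one_lt_of_pow_tendsto {c : K}
    (hc : Filter.Tendsto (fun n : ℕ => c ^ (p ^ n)) Filter.atTop (nhds 1)) : ‖c - 1‖ < 1 := by
  by_contra hge
  push_neg at hge
  have hall : ∀ n : ℕ, 1 ≤ ‖c ^ (p ^ n) - 1‖ := by
    intro n
    induction n with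
    | zero => simpa using hge
    | succ n ih =>
      have hstep : c ^ (p ^ (n + 1)) = (c ^ (p ^ n)) ^ p := by
        rw [← pow_mul, pow_succ]
      rw [hstep, norm_pow_p_sub_one ι hι ih]
      exact one_le_pow₀ ih
  have hev : ∀ᶠ n : ℕ in Filter.atTop, dist (c ^ (p ^ n)) 1 < 1 :=
    (Metric.tendsto_nhds.mp hc) 1 one_pos
  obtain ⟨n, hn⟩ := hev.exists
  rw [dist_eq_norm] at hn
  exact absurd (hall n) (not_le.mpr hn)

end KSide

section Main

variable {K : Type*} [NormedField K] [CompleteSpace K] [IsUltrametricDist K]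
variable (ι : ℚ_[p] →+* K) (hι : ∀ x, ‖ι x‖ = ‖x‖)
variable (q : ℕ) (hq : q = if p = 2 then 4 else p)

include hq in
lemma continuous_gU_valQ : Continuous fun s : ℤ_[p] => ((gU q hq s : ℤ_[p]) : ℚ_[p]) := by
  have h : (fun s : ℤ_[p] => ((gU q hq s : ℤ_[p]) : ℚ_[p])) = gser q := funext (gU_coe q hq)
  rw [h]
  exact continuous_gser q hq

include hq in
lemma continuous_gU_valZ : Continuous fun s : ℤ_[p] => (gU q hq s : ℤ_[p]) :=
  continuous_induced_rng.mpr (continuous_gU_valQ q hq)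

include hq in
lemma continuous_gU : Continuous (gU q hq) := by
  rw [Units.continuous_iff]
  refine ⟨continuous_gU_valZ q hq, ?_⟩
  have h : (fun s : ℤ_[p] => (((gU q hq s)⁻¹ : ℤ_[p]ˣ) : ℤ_[p]))
      = fun s : ℤ_[p] => (gU q hq (-s) : ℤ_[p]) := funext fun s => by rw [gU_neg q hq]
  rw [h]
  exact (continuous_gU_valZ q hq).comp continuous_neg

include hι hq in
lemma chi_u0_norm (u₀ : ℤ_[p]ˣ) (hu₀ : (u₀ : ℤ_[p]) = 1 + q) {χ : ℤ_[p]ˣ →* Kˣ}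
    (hχ : Continuous χ) : ‖((χ u₀ : Kˣ) : K) - 1‖ < 1 := by
  apply norm_sub_one_lt_of_pow_tendsto ι hι
  have hp1 : (1:ℝ) < p := by exact_mod_cast (Fact.out : p.Prime).one_lt
  have hpn : Filter.Tendsto (fun n : ℕ => ((p ^ n : ℕ) : ℤ_[p])) Filter.atTop (nhds 0) := by
    rw [tendsto_zero_iff_norm_tendsto_zero]
    have h : (fun n : ℕ => ‖((p ^ n : ℕ) : ℤ_[p])‖) = fun n : ℕ => ((p:ℝ)⁻¹) ^ n := by
      funext n
      push_cast
      rw [PadicInt.norm_p_pow, zpow_neg, zpow_natCast, inv_pow]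
    rw [h]
    apply tendsto_pow_atTop_nhds_zero_of_lt_one (by positivity)
    rw [inv_lt_one_iff₀]; right; exact hp1
  have h1 : Filter.Tendsto (fun n : ℕ => gU q hq ((p ^ n : ℕ) : ℤ_[p]))
      Filter.atTop (nhds (gU q hq 0)) :=
    ((continuous_gU q hq).tendsto 0).comp hpn
  rw [gU_zero q hq] at h1
  have h2 := (hχ.tendsto 1).comp h1
  rw [map_one] at h2
  have h3 := (Units.continuous_val.tendsto 1).comp h2
  rw [Units.val_one] at h3
  have h4 : (fun n : ℕ => ((χ (gU q hq ((p ^ n : ℕ) : ℤ_[p])) : Kˣ) : K))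
      = fun n : ℕ => ((χ u₀ : Kˣ) : K) ^ (p ^ n) := by
    funext n
    rw [show ((p ^ n : ℕ) : ℤ_[p]) = ((p ^ n : ℕ) : ℤ_[p]) * 1 from (mul_one _).symm,
      gU_natCast_mul q hq, gU_one q hq u₀ hu₀, map_pow, Units.val_pow_eq_pow_val]
  rw [← h4]
  exact h3

include hq in
lemma chi_ext (u₀ : ℤ_[p]ˣ) (hu₀ : (u₀ : ℤ_[p]) = 1 + q) {χ χ' : ℤ_[p]ˣ →* Kˣ}
    (hχ : Continuous χ) (hχ' : Continuous χ')
    (hT : ∀ t : ℤ_[p]ˣ, t ∈ CommGroup.torsion ℤ_[p]ˣ → χ t = χ' t)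
    (hu : χ u₀ = χ' u₀) : χ = χ' := by
  have hgU : ∀ s : ℤ_[p], χ (gU q hq s) = χ' (gU q hq s) := by
    have hcont1 : Continuous fun s : ℤ_[p] => ((χ (gU q hq s) : Kˣ) : K) :=
      Units.continuous_val.comp (hχ.comp (continuous_gU q hq))
    have hcont2 : Continuous fun s : ℤ_[p] => ((χ' (gU q hq s) : Kˣ) : K) :=
      Units.continuous_val.comp (hχ'.comp (continuous_gU q hq))
    have hd : Dense (Set.range fun n : ℕ => ((n : ℕ) : ℤ_[p])) := PadicInt.denseRange_natCast
    have heq := Continuous.ext_on hd hcont1 hcont2 ?_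
    · exact fun s => Units.ext (congrFun heq s)
    · rintro _ ⟨n, rfl⟩
      simp only
      rw [show ((n : ℕ) : ℤ_[p]) = ((n : ℕ) : ℤ_[p]) * 1 from (mul_one _).symm,
        gU_natCast_mul q hq, gU_one q hq u₀ hu₀, map_pow, map_pow, hu]
  apply MonoidHom.ext
  intro x
  have hd := decomp_eq q hq x
  calc χ x = χ (Tf q hq x * gU q hq (Sf q hq x)) := by rw [← hd]
    _ = χ (Tf q hq x) * χ (gU q hq (Sf q hq x)) := map_mul _ _ _
    _ = χ' (Tf q hq x) * χ' (gU q hq (Sf q hq x)) := by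
        rw [hT _ (Tf_mem q hq x), hgU]
    _ = χ' (Tf q hq x * gU q hq (Sf q hq x)) := (map_mul _ _ _).symm
    _ = χ' x := by rw [← hd]

-- construction of χ from (ω, u)
noncomputable def bUnit (u : K) (hu : ‖u - 1‖ < 1) (s : ℤ_[p]) : Kˣ where
  val := bseries (ι.comp PadicInt.Coe.ringHom) u s
  inv := bseries (ι.comp PadicInt.Coe.ringHom) u (-s)
  val_inv := by
    rw [← bseries_add (hjK ι hι) hu]
    rw [show s + -s = 0 by ring, bseries_zero]
  inv_val := by
    rw [← bseries_add (hjK ι hι) hu]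
    rw [show -s + s = 0 by ring, bseries_zero]

lemma bUnit_val (u : K) (hu : ‖u - 1‖ < 1) (s : ℤ_[p]) :
    ((bUnit ι hι u hu s : Kˣ) : K) = bseries (ι.comp PadicInt.Coe.ringHom) u s := rfl

lemma bUnit_add (u : K) (hu : ‖u - 1‖ < 1) (s t : ℤ_[p]) :
    bUnit ι hι u hu (s + t) = bUnit ι hι u hu s * bUnit ι hι u hu t :=
  Units.ext (bseries_add (hjK ι hι) hu s t)

lemma bUnit_zero (u : K) (hu : ‖u - 1‖ < 1) : bUnit ι hι u hu 0 = 1 :=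
  Units.ext (bseries_zero _ _)

lemma bUnit_one (u : K) (hu : ‖u - 1‖ < 1) : ((bUnit ι hι u hu 1 : Kˣ) : K) = u := by
  rw [bUnit_val]
  have h := bseries_natCast (ι.comp PadicInt.Coe.ringHom) u 1
  rwa [Nat.cast_one, pow_one] at h

noncomputable def chi (ω : ↥(CommGroup.torsion ℤ_[p]ˣ) →* Kˣ) (u : K) (hu : ‖u - 1‖ < 1) :
    ℤ_[p]ˣ →* Kˣ where
  toFun x := ω ⟨Tf q hq x, Tf_mem q hq x⟩ * bUnit ι hι u hu (Sf q hq x)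
  map_one' := by
    have h1 := Tf_one q hq
    have ht : (⟨Tf q hq 1, Tf_mem q hq 1⟩ : ↥(CommGroup.torsion ℤ_[p]ˣ)) = 1 :=
      Subtype.ext h1.1
    rw [ht, map_one, h1.2, bUnit_zero, one_mul]
  map_mul' x y := by
    have hm := Tf_mul q hq x y
    have ht : (⟨Tf q hq (x * y), Tf_mem q hq (x * y)⟩ : ↥(CommGroup.torsion ℤ_[p]ˣ))
        = ⟨Tf q hq x, Tf_mem q hq x⟩ * ⟨Tf q hq y, Tf_mem q hq y⟩ := Subtype.ext hm.1
    rw [ht, map_mul, hm.2, bUnit_add]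
    exact mul_mul_mul_comm _ _ _ _

lemma chi_apply (ω : ↥(CommGroup.torsion ℤ_[p]ˣ) →* Kˣ) (u : K) (hu : ‖u - 1‖ < 1)
    (x : ℤ_[p]ˣ) : chi ι hι q hq ω u hu x
      = ω ⟨Tf q hq x, Tf_mem q hq x⟩ * bUnit ι hι u hu (Sf q hq x) := rfl

include hq in
lemma chi_comp_torsion (ω : ↥(CommGroup.torsion ℤ_[p]ˣ) →* Kˣ) (u : K) (hu : ‖u - 1‖ < 1)
    (t : ↥(CommGroup.torsion ℤ_[p]ˣ)) :
    chi ι hι q hq ω u hu ((t : ℤ_[p]ˣ)) = ω t := by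
  have h1 := Tf_torsion q hq t.2
  rw [chi_apply]
  have ht : (⟨Tf q hq (t : ℤ_[p]ˣ), Tf_mem q hq _⟩ : ↥(CommGroup.torsion ℤ_[p]ˣ)) = t :=
    Subtype.ext h1.1
  rw [ht, h1.2, bUnit_zero, mul_one]

include hq in
lemma chi_at_u₀ (ω : ↥(CommGroup.torsion ℤ_[p]ˣ) →* Kˣ) (u : K) (hu : ‖u - 1‖ < 1)
    (u₀ : ℤ_[p]ˣ) (hu₀ : (u₀ : ℤ_[p]) = 1 + q) :
    ((chi ι hι q hq ω u hu u₀ : Kˣ) : K) = u := by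
  have h1 := Tf_u₀ q hq u₀ hu₀
  rw [chi_apply]
  have ht : (⟨Tf q hq u₀, Tf_mem q hq u₀⟩ : ↥(CommGroup.torsion ℤ_[p]ˣ)) = 1 :=
    Subtype.ext h1.1
  rw [ht, map_one, h1.2, one_mul, bUnit_one]

include hq in
lemma continuous_chi (ω : ↥(CommGroup.torsion ℤ_[p]ˣ) →* Kˣ) (u : K) (hu : ‖u - 1‖ < 1) :
    Continuous (chi ι hι q hq ω u hu) := by
  have hρ : 0 < ‖(q : ℚ_[p])‖ := norm_q_pos q hq
  have hFQ : Continuous fun x : ℤ_[p]ˣ => ((x : ℤ_[p]) : ℚ_[p]) := by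
    apply Continuous.comp _ Units.continuous_val
    exact continuous_induced_rng.mp continuous_id
  have hTev : ∀ x₀ : ℤ_[p]ˣ, ∀ᶠ x : ℤ_[p]ˣ in nhds x₀, Tf q hq x = Tf q hq x₀ := by
    intro x₀
    have hball := (hFQ.tendsto x₀).eventually
      (Metric.ball_mem_nhds (((x₀ : ℤ_[p]) : ℚ_[p])) hρ)
    refine hball.mono fun x hx => ?_
    simp only [Metric.mem_ball, dist_eq_norm] at hx
    exact Tf_eq_of_close q hq hx.le
  have hScont : Continuous (Sf q hq) := by
    rw [continuous_iff_continuousAt]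
    intro x₀
    rw [ContinuousAt, Metric.tendsto_nhds]
    intro ε hε
    have hmin : 0 < min ‖(q : ℚ_[p])‖ (ε * ‖(q : ℚ_[p])‖) := by positivity
    have hball := (hFQ.tendsto x₀).eventually
      (Metric.ball_mem_nhds (((x₀ : ℤ_[p]) : ℚ_[p])) hmin)
    refine hball.mono fun x hx => ?_
    simp only [Metric.mem_ball, dist_eq_norm] at hx
    have h1 : ‖((x : ℤ_[p]) : ℚ_[p]) - ((x₀ : ℤ_[p]) : ℚ_[p])‖ ≤ ‖(q : ℚ_[p])‖ :=
      (lt_of_lt_of_le hx (min_le_left _ _)).le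
    have h2 := Sf_dist_eq q hq h1
    have h3 : ‖Sf q hq x - Sf q hq x₀‖ * ‖(q : ℚ_[p])‖ < ε * ‖(q : ℚ_[p])‖ := by
      rw [h2]
      exact lt_of_lt_of_le hx (min_le_right _ _)
    rw [dist_eq_norm]
    exact lt_of_mul_lt_mul_right h3 hρ.le
  have hval : Continuous fun x : ℤ_[p]ˣ => ((chi ι hι q hq ω u hu x : Kˣ) : K) := by
    rw [continuous_iff_continuousAt]
    intro x₀
    have hrhs : ContinuousAt (fun x : ℤ_[p]ˣ =>
        ((ω ⟨Tf q hq x₀, Tf_mem q hq x₀⟩ : Kˣ) : K)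
          * bseries (ι.comp PadicInt.Coe.ringHom) u (Sf q hq x)) x₀ := by
      apply ContinuousAt.mul continuousAt_const
      exact ((continuous_bseries (hjK ι hι) hu).comp hScont).continuousAt
    apply hrhs.congr
    refine (hTev x₀).mono fun x hx => ?_
    show ((ω ⟨Tf q hq x₀, Tf_mem q hq x₀⟩ : Kˣ) : K)
        * bseries (ι.comp PadicInt.Coe.ringHom) u (Sf q hq x)
      = ((chi ι hι q hq ω u hu x : Kˣ) : K)
    rw [chi_apply, Units.val_mul, bUnit_val]
    have hsub : (⟨Tf q hq x, Tf_mem q hq x⟩ : ↥(CommGroup.torsion ℤ_[p]ˣ))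
        = ⟨Tf q hq x₀, Tf_mem q hq x₀⟩ := Subtype.ext hx
    rw [hsub]
  rw [Units.continuous_iff]
  refine ⟨hval, ?_⟩
  have h : (fun x : ℤ_[p]ˣ => (((chi ι hι q hq ω u hu x)⁻¹ : Kˣ) : K))
      = fun x : ℤ_[p]ˣ => ((chi ι hι q hq ω u hu x⁻¹ : Kˣ) : K) := by
    funext x
    rw [← map_inv]
  rw [h]
  exact hval.comp continuous_inv

end Main

end WS


/-- The weight space on `K`-points: `χ ↦ (χ|_T, χ(1+q))` is a bijection from the set of
continuous group homomorphisms `ℤ_p^× → K^×` onto the set of pairs `(ω, u)` with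
`ω : T → K^×` a group homomorphism (`T` the torsion subgroup of `ℤ_p^×`) and
`u ∈ K` with `‖u - 1‖ < 1`. -/
theorem weight_space_bijection (p : ℕ) [Fact p.Prime]
    (q : ℕ) (hq : q = if p = 2 then 4 else p)
    {K : Type*} [NormedField K] [CompleteSpace K] [IsUltrametricDist K]
    (ι : ℚ_[p] →+* K) (hι : ∀ x, ‖ι x‖ = ‖x‖)
    (u₀ : ℤ_[p]ˣ) (hu₀ : (u₀ : ℤ_[p]) = 1 + q) :
    Set.BijOn
      (fun χ : ℤ_[p]ˣ →* Kˣ =>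
        ((χ.comp (CommGroup.torsion ℤ_[p]ˣ).subtype, ((χ u₀ : Kˣ) : K)) :
          ((CommGroup.torsion ℤ_[p]ˣ) →* Kˣ) × K))
      {χ : ℤ_[p]ˣ →* Kˣ | Continuous χ}
      {y : ((CommGroup.torsion ℤ_[p]ˣ) →* Kˣ) × K | ‖y.2 - 1‖ < 1} := by
  refine ⟨?_, ?_, ?_⟩
  · intro χ hχ
    simp only [Set.mem_setOf_eq] at hχ ⊢
    exact WS.chi_u0_norm ι hι q hq u₀ hu₀ hχ
  · intro χ hχ χ' hχ' heq
    simp only [Set.mem_setOf_eq] at hχ hχ'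
    simp only [Prod.mk.injEq] at heq
    refine WS.chi_ext q hq u₀ hu₀ hχ hχ' ?_ (Units.ext heq.2)
    intro t ht
    have := DFunLike.congr_fun heq.1 ⟨t, ht⟩
    simpa using this
  · rintro ⟨ω, v⟩ hv
    simp only [Set.mem_setOf_eq] at hv
    refine ⟨WS.chi ι hι q hq ω v hv, ?_, ?_⟩
    · exact WS.continuous_chi ι hι q hq ω v hv
    · refine Prod.ext ?_ ?_
      · apply MonoidHom.ext
        intro t
        simp only [MonoidHom.comp_apply]
        exact WS.chi_comp_torsion ι hι q hq ω v hv t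
      · exact WS.chi_at_u₀ ι hι q hq ω v hv u₀ hu₀
end

section
/- Let p be a prime and K a field complete with respect to a nonarchimedean absolute value |·|, equipped with an isometric field embedding of Q_p (absolute value normalized by |p| = 1/p). Let k ∈ ℤ and let ε : Z_p^× → K^× be a continuous group homomorphism with finite image, and define χ : Z_p^× → K^× by χ(a) = ε(a)·a^k. Then the function a ↦ ℓ(χ(a))/ℓ(a) is defined for all a ≠ 1 in a sufficiently small neighborhood of 1 in Z_p^×, and it tends to k as a → 1 (limit along the punctured neighborhood filter of 1 in Z_p^×); here ℓ(u) = Σ_{m≥1}(−1)^{m+1}(u−1)^m/m is the p-adic logarithm series. -/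
open IsUltrametricDist

lemma my_padic_norm_natCast_ge (p : ℕ) [Fact p.Prime] (n : ℕ) (hn : 0 < n) :
    ((n : ℝ))⁻¹ ≤ ‖((n : ℚ_[p]))‖ := by
  have hn0 : ((n : ℚ_[p])) ≠ 0 := Nat.cast_ne_zero.2 hn.ne'
  rw [Padic.norm_eq_zpow_neg_valuation hn0, Padic.valuation_natCast, zpow_neg, zpow_natCast]
  have hle : ((p : ℝ)) ^ padicValNat p n ≤ (n : ℝ) := by
    exact_mod_cast Nat.le_of_dvd hn pow_padicValNat_dvd
  have hp : (0 : ℝ) < p := by exact_mod_cast (Fact.out : p.Prime).pos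
  exact inv_anti₀ (by positivity) hle

section K
variable {K : Type*} [NormedField K] [IsUltrametricDist K]

lemma my_norm_le_one {u : K} (hu : ‖u - 1‖ < 1) : ‖u‖ ≤ 1 := by
  calc ‖u‖ = ‖(u - 1) + 1‖ := by ring_nf
  _ ≤ max ‖u - 1‖ ‖(1 : K)‖ := norm_add_le_max _ _
  _ ≤ 1 := by simp [max_le_iff, hu.le]

lemma my_norm_eq_one {u : K} (hu : ‖u - 1‖ < 1) : ‖u‖ = 1 := by
  have h : ‖u - 1‖ ≠ ‖(1 : K)‖ := by simp [hu.ne]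
  have := norm_add_eq_max_of_norm_ne_norm h
  have he : (u - 1) + 1 = u := by ring
  rw [he] at this
  simp only [norm_one] at this
  rw [this, max_eq_right hu.le]

lemma my_norm_pow_sub_one_le {u : K} (hu : ‖u - 1‖ < 1) (n : ℕ) :
    ‖u ^ n - 1‖ ≤ ‖u - 1‖ := by
  induction n with
  | zero => simpa using norm_nonneg _
  | succ n ih =>
    have he : u ^ (n + 1) - 1 = u ^ n * (u - 1) + (u ^ n - 1) := by ring
    rw [he]
    refine (norm_add_le_max _ _).trans (max_le ?_ ih)
    rw [norm_mul]
    calc ‖u ^ n‖ * ‖u - 1‖ ≤ 1 * ‖u - 1‖ := by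
          exact mul_le_mul_of_nonneg_right
            ((norm_pow_le u n).trans (pow_le_one₀ (norm_nonneg _) (my_norm_le_one hu)))
            (norm_nonneg _)
      _ = ‖u - 1‖ := one_mul _

lemma my_norm_pow_sub_le {u : K} (hu : ‖u - 1‖ < 1) (n : ℕ) :
    ‖u ^ n - 1 - (n : K) * (u - 1)‖ ≤ ‖u - 1‖ ^ 2 := by
  induction n with
  | zero => simpa using sq_nonneg _
  | succ n ih =>
    have he : u ^ (n + 1) - 1 - ((n + 1 : ℕ) : K) * (u - 1)
        = (u ^ n - 1 - (n : K) * (u - 1)) + (u ^ n - 1) * (u - 1) := by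
      push_cast; ring
    rw [he]
    refine (norm_add_le_max _ _).trans (max_le ih ?_)
    rw [norm_mul, sq]
    exact mul_le_mul_of_nonneg_right (my_norm_pow_sub_one_le hu n) (norm_nonneg _)

lemma my_norm_zpow_est {u : K} (hu : ‖u - 1‖ < 1) (k : ℤ) :
    ‖u ^ k - 1‖ ≤ ‖u - 1‖ ∧ ‖u ^ k - 1 - (k : K) * (u - 1)‖ ≤ ‖u - 1‖ ^ 2 := by
  have hu1 : ‖u‖ = 1 := my_norm_eq_one hu
  have hu0 : u ≠ 0 := by intro h; rw [h] at hu1; simp at hu1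
  cases k with
  | ofNat n =>
    rw [Int.ofNat_eq_coe, zpow_natCast]
    exact ⟨my_norm_pow_sub_one_le hu n, by
      simpa using my_norm_pow_sub_le hu n⟩
  | negSucc n =>
    set v : K := u⁻¹ with hv
    have hvu : v - 1 = -(u⁻¹ * (u - 1)) := by
      rw [hv]; field_simp; ring
    have hvnorm : ‖v - 1‖ = ‖u - 1‖ := by
      rw [hvu, norm_neg, norm_mul, norm_inv, hu1]; simp
    have hv1 : ‖v - 1‖ < 1 := by rw [hvnorm]; exact hu
    have hpow : u ^ (Int.negSucc n) = v ^ (n + 1) := by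
      rw [zpow_negSucc, ← inv_pow]
    constructor
    · rw [hpow]
      exact (my_norm_pow_sub_one_le hv1 (n + 1)).trans (le_of_eq hvnorm)
    · have he : u ^ (Int.negSucc n) - 1 - ((Int.negSucc n : ℤ) : K) * (u - 1)
          = (v ^ (n + 1) - 1 - ((n + 1 : ℕ) : K) * (v - 1))
            + ((n + 1 : ℕ) : K) * ((v - 1) + (u - 1)) := by
        rw [hpow]; push_cast; ring
      rw [he]
      refine (norm_add_le_max _ _).trans (max_le ?_ ?_)
      · exact (my_norm_pow_sub_le hv1 (n + 1)).trans (le_of_eq (by rw [hvnorm]))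
      · have hsum : (v - 1) + (u - 1) = (u - 1) * u⁻¹ * (u - 1) := by
          rw [hv]; field_simp; ring
        rw [hsum, norm_mul]
        calc ‖((n + 1 : ℕ) : K)‖ * ‖(u - 1) * u⁻¹ * (u - 1)‖
            ≤ 1 * ‖(u - 1) * u⁻¹ * (u - 1)‖ :=
              mul_le_mul_of_nonneg_right (norm_natCast_le_one K _) (norm_nonneg _)
          _ = ‖u - 1‖ ^ 2 := by
              rw [one_mul, norm_mul, norm_mul, norm_inv, hu1]; ring

end K

lemma my_log_approx (p : ℕ) [Fact p.Prime]
    {K : Type*} [NormedField K] [CompleteSpace K] [IsUltrametricDist K]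
    (ι : ℚ_[p] →+* K) (hι : ∀ x, ‖ι x‖ = ‖x‖)
    (L : K → K)
    (hL : ∀ u : K, ‖u - 1‖ < 1 →
      HasSum (fun m : ℕ => (-1) ^ m * (u - 1) ^ (m + 1) / ((m + 1 : ℕ) : K)) (L u))
    {u : K} (hu : ‖u - 1‖ ≤ 4⁻¹) :
    ‖L u - (u - 1)‖ ≤ 2 * ‖u - 1‖ ^ 2 := by
  have hu1 : ‖u - 1‖ < 1 := lt_of_le_of_lt hu (by norm_num)
  have hs := hL u hu1
  have hs' : HasSum (fun m : ℕ => (-1) ^ (m + 1) * (u - 1) ^ (m + 1 + 1) / ((m : K) + 1 + 1))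
      (L u - (u - 1)) := by
    have h2 := (hasSum_nat_add_iff' (f := fun m : ℕ => (-1) ^ m * (u - 1) ^ (m + 1)
      / ((m + 1 : ℕ) : K)) 1).2 hs
    simpa using h2
  rw [← hs'.tsum_eq]
  refine norm_tsum_le_of_forall_le_of_nonneg (by positivity) (fun m => ?_)
  have hden : ((m + 2 : ℝ))⁻¹ ≤ ‖((m + 2 : ℕ) : K)‖ := by
    rw [← map_natCast ι (m + 2), hι]
    exact_mod_cast my_padic_norm_natCast_ge p (m + 2) (by omega)
  have hdenpos : (0 : ℝ) < ‖((m + 2 : ℕ) : K)‖ :=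
    lt_of_lt_of_le (by positivity) hden
  have hinv : ‖((m + 2 : ℕ) : K)‖⁻¹ ≤ ((m + 2 : ℝ)) := by
    rw [← inv_inv ((m + 2 : ℝ))]
    exact inv_anti₀ (by positivity) hden
  set r := ‖u - 1‖ with hr
  have hr0 : 0 ≤ r := norm_nonneg _
  have hnat : ∀ m : ℕ, m + 2 ≤ 2 * 4 ^ m := by
    intro m
    induction m with
    | zero => norm_num
    | succ n ih =>
      have h4 : 1 ≤ 4 ^ n := Nat.one_le_pow _ _ (by norm_num)
      have hpow : (4 : ℕ) ^ (n + 1) = 4 * 4 ^ n := by ring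
      rw [hpow]
      omega
  have hkey : ((m : ℝ) + 2) * (4⁻¹ : ℝ) ^ m ≤ 2 := by
    rw [inv_pow, mul_inv_le_iff₀ (by positivity)]
    exact_mod_cast hnat m
  have hterm : r ^ (m + 2) * ((m : ℝ) + 2) ≤ 2 * r ^ 2 := by
    have hrm : r ^ m ≤ (4⁻¹ : ℝ) ^ m := pow_le_pow_left₀ hr0 hu m
    have h1 : r ^ m * ((m : ℝ) + 2) ≤ 2 :=
      le_trans (mul_le_mul_of_nonneg_right hrm (by positivity)) (by linarith [hkey])
    calc r ^ (m + 2) * ((m : ℝ) + 2) = r ^ 2 * (r ^ m * ((m : ℝ) + 2)) := by ring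
      _ ≤ r ^ 2 * 2 := mul_le_mul_of_nonneg_left h1 (by positivity)
      _ = 2 * r ^ 2 := by ring
  have hc : ((m : K) + 1 + 1) = ((m + 2 : ℕ) : K) := by push_cast; ring
  calc ‖(-1 : K) ^ (m + 1) * (u - 1) ^ (m + 1 + 1) / ((m : K) + 1 + 1)‖
      = r ^ (m + 2) * ‖((m + 2 : ℕ) : K)‖⁻¹ := by
        rw [hc, norm_div, norm_mul, norm_pow, norm_pow, norm_neg, norm_one, one_pow, one_mul,
          div_eq_mul_inv]
    _ ≤ r ^ (m + 2) * ((m : ℝ) + 2) :=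
        mul_le_mul_of_nonneg_left hinv (by positivity)
    _ ≤ 2 * r ^ 2 := hterm

lemma my_L_norm_eq (p : ℕ) [Fact p.Prime]
    {K : Type*} [NormedField K] [CompleteSpace K] [IsUltrametricDist K]
    (ι : ℚ_[p] →+* K) (hι : ∀ x, ‖ι x‖ = ‖x‖)
    (L : K → K)
    (hL : ∀ u : K, ‖u - 1‖ < 1 →
      HasSum (fun m : ℕ => (-1) ^ m * (u - 1) ^ (m + 1) / ((m + 1 : ℕ) : K)) (L u))
    {u : K} (h0 : u ≠ 1) (h4 : ‖u - 1‖ ≤ 4⁻¹) : ‖L u‖ = ‖u - 1‖ := by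
  set r := ‖u - 1‖ with hr
  have hr0 : 0 < r := norm_pos_iff.2 (sub_ne_zero.2 h0)
  have hLu : ‖L u - (u - 1)‖ ≤ 2 * r ^ 2 := my_log_approx p ι hι L hL h4
  have h2rr : 2 * r ^ 2 < r := by nlinarith
  have hdne : ‖u - 1‖ ≠ ‖L u - (u - 1)‖ := (lt_of_le_of_lt hLu h2rr).ne'
  have hmax := norm_add_eq_max_of_norm_ne_norm hdne
  rw [show (u - 1) + (L u - (u - 1)) = L u by ring] at hmax
  rw [hmax, max_eq_left (le_of_lt (lt_of_le_of_lt hLu h2rr))]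

/-- A classical character `χ = ε·χ_cycl^k` (with `ε` of finite order) has weight `k`:
the ratio `ℓ(χ(a))/ℓ(a)` is defined for `a ≠ 1` near `1` and tends to `k` as `a → 1`
in `ℤ_p^×`. Here `L` is the logarithm series on the open unit ball around `1` in `K`. -/
theorem weight_of_classical_character (p : ℕ) [Fact p.Prime]
    {K : Type*} [NormedField K] [CompleteSpace K] [IsUltrametricDist K]
    (ι : ℚ_[p] →+* K) (hι : ∀ x, ‖ι x‖ = ‖x‖)
    (k : ℤ) (ε : ℤ_[p]ˣ →* Kˣ) (hεc : Continuous ε)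
    (hεfin : (Set.range (ε : ℤ_[p]ˣ → Kˣ)).Finite)
    (L : K → K)
    (hL : ∀ u : K, ‖u - 1‖ < 1 →
      HasSum (fun m : ℕ => (-1) ^ m * (u - 1) ^ (m + 1) / ((m + 1 : ℕ) : K)) (L u)) :
    (∀ᶠ a in nhdsWithin (1 : ℤ_[p]ˣ) {1}ᶜ, L (ι ((a : ℤ_[p]) : ℚ_[p])) ≠ 0) ∧
    Filter.Tendsto
      (fun a : ℤ_[p]ˣ =>
        L (((ε a : Kˣ) : K) * (ι ((a : ℤ_[p]) : ℚ_[p])) ^ k) / L (ι ((a : ℤ_[p]) : ℚ_[p])))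
      (nhdsWithin (1 : ℤ_[p]ˣ) {1}ᶜ) (nhds ((k : ℤ) : K)) := by
  classical
  set F := nhdsWithin (1 : ℤ_[p]ˣ) {1}ᶜ with hF
  -- the norm identity
  have hnormu : ∀ a : ℤ_[p]ˣ, ‖ι ((a : ℤ_[p]) : ℚ_[p]) - 1‖ = ‖(a : ℤ_[p]) - 1‖ := by
    intro a
    rw [show ι ((a : ℤ_[p]) : ℚ_[p]) - 1 = ι (((a : ℤ_[p]) : ℚ_[p]) - 1) by
      rw [map_sub, map_one], hι, PadicInt.norm_def]
    push_cast
    ring_nf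
  -- ε is eventually 1
  have hεev : ∀ᶠ a in F, ε a = 1 := by
    have hclosed : IsClosed ((ε : ℤ_[p]ˣ → Kˣ) ⁻¹'
        (Set.range (ε : ℤ_[p]ˣ → Kˣ) \ {1})) :=
      ((hεfin.subset Set.diff_subset).isClosed).preimage hεc
    have hcompl : ((ε : ℤ_[p]ˣ → Kˣ) ⁻¹' {1})ᶜ
        = (ε : ℤ_[p]ˣ → Kˣ) ⁻¹' (Set.range (ε : ℤ_[p]ˣ → Kˣ) \ {1}) := by
      ext a
      simp [Set.mem_preimage, Set.mem_diff]
    have hopen : IsOpen ((ε : ℤ_[p]ˣ → Kˣ) ⁻¹' {1}) := by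
      rw [← isClosed_compl_iff, hcompl]
      exact hclosed
    have h1 : (1 : ℤ_[p]ˣ) ∈ (ε : ℤ_[p]ˣ → Kˣ) ⁻¹' {1} := by
      simp [Set.mem_preimage, map_one]
    filter_upwards [Filter.eventually_iff_exists_mem.2
      ⟨_, nhdsWithin_le_nhds (hopen.mem_nhds h1), fun a ha => ha⟩] with a ha using ha
  -- the norm of a - 1 tends to 0
  have htend : Filter.Tendsto (fun a : ℤ_[p]ˣ => ‖(a : ℤ_[p]) - 1‖) F (nhds 0) := by
    have hc : Continuous (fun a : ℤ_[p]ˣ => ‖(a : ℤ_[p]) - 1‖) :=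
      (Units.continuous_val.sub continuous_const).norm
    have h0 := hc.tendsto (1 : ℤ_[p]ˣ)
    simp only [Units.val_one, sub_self, norm_zero] at h0
    exact h0.mono_left nhdsWithin_le_nhds
  have hquarter : ∀ᶠ a : ℤ_[p]ˣ in F, ‖(a : ℤ_[p]) - 1‖ ≤ 4⁻¹ := by
    filter_upwards [htend.eventually_lt_const (by norm_num : (0:ℝ) < 4⁻¹)] with a ha
      using ha.le
  have hne : ∀ᶠ a : ℤ_[p]ˣ in F, (a : ℤ_[p]) ≠ 1 := by
    filter_upwards [self_mem_nhdsWithin] with a ha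
    exact fun h => ha (Units.ext h)
  -- the key pointwise estimate
  have key : ∀ a : ℤ_[p]ˣ, ε a = 1 → (a : ℤ_[p]) ≠ 1 → ‖(a : ℤ_[p]) - 1‖ ≤ 4⁻¹ →
      L (ι ((a : ℤ_[p]) : ℚ_[p])) ≠ 0 ∧
      ‖L (((ε a : Kˣ) : K) * (ι ((a : ℤ_[p]) : ℚ_[p])) ^ k) / L (ι ((a : ℤ_[p]) : ℚ_[p]))
        - ((k : ℤ) : K)‖ ≤ 2 * ‖(a : ℤ_[p]) - 1‖ := by
    intro a hε1 hane hsm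
    set u : K := ι ((a : ℤ_[p]) : ℚ_[p]) with hu
    set r : ℝ := ‖(a : ℤ_[p]) - 1‖ with hrdef
    have hru : ‖u - 1‖ = r := hnormu a
    have hr4 : r ≤ 4⁻¹ := hsm
    have hr0 : 0 < r := norm_pos_iff.2 (sub_ne_zero.2 hane)
    have hru4 : ‖u - 1‖ ≤ 4⁻¹ := by rw [hru]; exact hr4
    have hr1 : ‖u - 1‖ < 1 := lt_of_le_of_lt hru4 (by norm_num)
    -- L u ≈ u - 1
    have hLu : ‖L u - (u - 1)‖ ≤ 2 * r ^ 2 := by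
      have := my_log_approx p ι hι L hL hru4
      rwa [hru] at this
    have h2rr : 2 * r ^ 2 < r := by nlinarith
    have hune : u ≠ 1 := by
      intro h
      rw [h, sub_self, norm_zero] at hru
      exact hr0.ne hru
    have hLnorm : ‖L u‖ = r := by
      rw [my_L_norm_eq p ι hι L hL hune hru4, hru]
    have hLne : L u ≠ 0 := by
      intro h
      rw [h, norm_zero] at hLnorm
      exact hr0.ne hLnorm
    -- estimates for u ^ k
    obtain ⟨hzk1, hzk2⟩ := my_norm_zpow_est hr1 k
    have hzk1' : ‖u ^ k - 1‖ ≤ r := hzk1.trans (le_of_eq hru)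
    have hLuk : ‖L (u ^ k) - (u ^ k - 1)‖ ≤ 2 * r ^ 2 := by
      have h4 : ‖u ^ k - 1‖ ≤ 4⁻¹ := hzk1'.trans hr4
      have := my_log_approx p ι hι L hL h4
      refine this.trans ?_
      have : ‖u ^ k - 1‖ ^ 2 ≤ r ^ 2 := by
        exact pow_le_pow_left₀ (norm_nonneg _) hzk1' 2
      linarith
    have hzk2' : ‖u ^ k - 1 - (k : K) * (u - 1)‖ ≤ r ^ 2 := by
      refine hzk2.trans ?_
      rw [hru]
    -- numerator estimate
    have hnum : ‖L (u ^ k) - ((k : ℤ) : K) * L u‖ ≤ 2 * r ^ 2 := by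
      have he : L (u ^ k) - ((k : ℤ) : K) * L u
          = (L (u ^ k) - (u ^ k - 1))
            + ((u ^ k - 1 - (k : K) * (u - 1)) + (-(k : K)) * (L u - (u - 1))) := by
        push_cast
        ring
      rw [he]
      refine (norm_add_le_max _ _).trans (max_le hLuk
        ((norm_add_le_max _ _).trans (max_le (hzk2'.trans (by nlinarith)) ?_)))
      rw [norm_mul, norm_neg]
      calc ‖(k : K)‖ * ‖L u - (u - 1)‖ ≤ 1 * ‖L u - (u - 1)‖ :=
            mul_le_mul_of_nonneg_right (norm_intCast_le_one K k) (norm_nonneg _)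
        _ = ‖L u - (u - 1)‖ := one_mul _
        _ ≤ 2 * r ^ 2 := hLu
    refine ⟨hLne, ?_⟩
    rw [hε1]
    simp only [Units.val_one, one_mul]
    have hdiv : L (u ^ k) / L u - ((k : ℤ) : K)
        = (L (u ^ k) - ((k : ℤ) : K) * L u) / L u := by
      field_simp
    rw [hdiv, norm_div, hLnorm, div_le_iff₀ hr0]
    nlinarith [hnum]
  constructor
  · have hc : Continuous (fun a : ℤ_[p] => ‖a - 1‖) :=
      (continuous_id.sub continuous_const).norm
    have h0 := hc.tendsto ((1 : ℤ_[p]ˣ) : ℤ_[p])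
    simp only [Units.val_one, sub_self, norm_zero] at h0
    have htend2 := h0.mono_left (nhdsWithin_le_nhds (s := ({1}ᶜ : Set ℤ_[p])))
    have hq := htend2.eventually_lt_const (by norm_num : (0:ℝ) < 4⁻¹)
    filter_upwards [hq, self_mem_nhdsWithin] with a h3 h2
    have hnorm : ‖ι ((a : ℤ_[p]) : ℚ_[p]) - 1‖ = ‖a - 1‖ := by
      rw [show ι ((a : ℤ_[p]) : ℚ_[p]) - 1 = ι (((a : ℤ_[p]) : ℚ_[p]) - 1) by
        rw [map_sub, map_one], hι, PadicInt.norm_def]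
      push_cast
      ring_nf
    have hr0 : (0 : ℝ) < ‖(a : ℤ_[p]) - 1‖ :=
      norm_pos_iff.2 (sub_ne_zero.2 (by simpa using h2))
    have hune : ι ((a : ℤ_[p]) : ℚ_[p]) ≠ 1 := by
      intro h
      rw [h, sub_self, norm_zero] at hnorm
      exact hr0.ne hnorm
    have hLn := my_L_norm_eq p ι hι L hL hune (by rw [hnorm]; exact h3.le)
    intro h
    rw [h, norm_zero, hnorm] at hLn
    exact hr0.ne hLn
  · rw [← tendsto_sub_nhds_zero_iff]
    refine squeeze_zero_norm' (a := fun a : ℤ_[p]ˣ => 2 * ‖(a : ℤ_[p]) - 1‖) ?_ ?_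
    · filter_upwards [hεev, hne, hquarter] with a h1 h2 h3
      exact (key a h1 h2 h3).2
    · have := htend.const_mul (2 : ℝ)
      simpa using this
end
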